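/- Let B be a separable complex Banach space and let (T t)_{t≥0} be a C₀-semigroup on B. Suppose there exist an open connected set Ω ⊆ ℂ with Ω ∩ iℝ ≠ ∅ and a map F : Ω → B such that (i) for every λ ∈ Ω and every t ≥ 0 one has T t (F λ) = exp(t·λ) • F λ; (ii) for every continuous linear functional φ on B the map λ ↦ φ(F λ) is holomorphic on Ω; and (iii) if φ is a continuous linear functional with φ(F λ) = 0 for all λ ∈ Ω, then φ = 0. Then T is chaotic, i.e. some orbit {T t f : t ≥ 0} is dense in B and the set of periodic points {f ∈ B : ∃ t > 0, T t f = f} is dense in B. -/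

import Mathlib

open Filter Topology Metric Set Complex

/-- If no nonzero continuous functional annihilates `s`, the span of `s` is dense. -/
lemma dense_span_total {B : Type*} [NormedAddCommGroup B] [NormedSpace ℂ B]
    (s : Set B) (h : ∀ φ : B →L[ℂ] ℂ, (∀ x ∈ s, φ x = 0) → φ = 0) :
    Dense (Submodule.span ℂ s : Set B) := by
  rw [Submodule.dense_iff_topologicalClosure_eq_top]
  by_contra hd
  set M := (Submodule.span ℂ s).topologicalClosure with hM
  obtain ⟨x, hx⟩ : ∃ x, x ∉ M := by
    by_contra hc
    push_neg at hc
    exact hd (Submodule.eq_top_iff'.2 hc)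
  obtain ⟨f, u, hfx, hfb⟩ :=
    RCLike.geometric_hahn_banach_point_closed (𝕜 := ℂ)
      ((Submodule.restrictScalars ℝ M).convex)
      (Submodule.isClosed_topologicalClosure _) hx
  have hM0 : ∀ b ∈ M, f b = 0 := by
    intro b hb
    by_contra hfb0
    have hns : Complex.normSq (f b) ≠ 0 := by simpa [Complex.normSq_eq_zero] using hfb0
    set c : ℂ := (((u - 1) / Complex.normSq (f b) : ℝ) : ℂ) * (starRingEnd ℂ) (f b) with hc
    have hmem : c • b ∈ M := M.smul_mem c hb
    have : f (c • b) = ((u - 1 : ℝ) : ℂ) := by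
      rw [map_smul, smul_eq_mul, hc]
      rw [mul_assoc, mul_comm ((starRingEnd ℂ) (f b)) (f b), Complex.mul_conj]
      push_cast
      field_simp
      rw [mul_div_assoc, div_self (by exact_mod_cast hns), mul_one]
    have h2 := hfb _ hmem
    rw [this] at h2
    simp only [RCLike.re_to_complex, Complex.ofReal_re] at h2
    linarith
  have hsub : s ⊆ (M : Set B) :=
    fun y hy => (Submodule.span ℂ s).le_topologicalClosure (Submodule.subset_span hy)
  have : f = 0 := h f fun y hy => hM0 y (hsub hy)
  rw [this] at hfx hfb
  have h0 : u < 0 := by simpa using hfb 0 M.zero_mem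
  simp only [ContinuousLinearMap.zero_apply, map_zero] at hfx
  linarith

theorem dsw_chaos_criterion
    {B : Type*} [NormedAddCommGroup B] [NormedSpace ℂ B] [CompleteSpace B]
    [TopologicalSpace.SeparableSpace B]
    (T : ℝ → B →L[ℂ] B)
    (hT0 : T 0 = 1)
    (hTadd : ∀ s t : ℝ, 0 ≤ s → 0 ≤ t → T (s + t) = (T s).comp (T t))
    (hTcont : ∀ f : B, ContinuousOn (fun t => T t f) (Set.Ici (0 : ℝ)))
    (Ω : Set ℂ) (hΩopen : IsOpen Ω) (hΩconn : IsConnected Ω)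
    (hΩim : ∃ y : ℝ, (Complex.I * (y : ℂ)) ∈ Ω)
    (F : ℂ → B)
    (hEig : ∀ z ∈ Ω, ∀ t : ℝ, 0 ≤ t → T t (F z) = Complex.exp ((t : ℂ) * z) • F z)
    (hHol : ∀ φ : B →L[ℂ] ℂ, DifferentiableOn ℂ (fun z => φ (F z)) Ω)
    (hTotal : ∀ φ : B →L[ℂ] ℂ, (∀ z ∈ Ω, φ (F z) = 0) → φ = 0) :
    (∃ f : B, Dense ((fun t => T t f) '' Set.Ici (0 : ℝ))) ∧
      Dense {f : B | ∃ t : ℝ, 0 < t ∧ T t f = f} := by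
  classical
  obtain ⟨y₀, hy₀⟩ := hΩim
  set z₀ : ℂ := Complex.I * (y₀ : ℂ) with hz₀def
  obtain ⟨r, hr, hball⟩ := Metric.isOpen_iff.1 hΩopen z₀ hy₀
  -- the three parameter sets
  set Sm : Set ℂ := {z | z ∈ Ω ∧ z.re < 0} with hSm
  set Sp : Set ℂ := {z | z ∈ Ω ∧ 0 < z.re} with hSp
  set Sq : Set ℂ := {z | z ∈ Ω ∧ ∃ q : ℚ, z = Complex.I * (q : ℂ)} with hSq
  -- density of spans over sets accumulating inside Ω
  have key : ∀ S : Set ℂ, S ⊆ Ω → (∀ ε : ℝ, 0 < ε → ∃ z ∈ S, z ≠ z₀ ∧ dist z z₀ < ε) →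
      Dense ((Submodule.span ℂ (F '' S) : Submodule ℂ B) : Set B) := by
    intro S hSΩ hacc
    apply dense_span_total
    intro φ hφ
    have hA : AnalyticOnNhd ℂ (fun z => φ (F z)) Ω := (hHol φ).analyticOnNhd hΩopen
    have hfreq : ∃ᶠ z in 𝓝[≠] z₀, φ (F z) = 0 := by
      rw [Filter.frequently_iff]
      intro U hU
      rw [Metric.mem_nhdsWithin_iff] at hU
      obtain ⟨ε, hε, hsub⟩ := hU
      obtain ⟨z, hzS, hne, hd⟩ := hacc ε hε
      exact ⟨z, hsub ⟨Metric.mem_ball.2 hd, hne⟩, hφ _ ⟨z, hzS, rfl⟩⟩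
    have heq : Set.EqOn (fun z => φ (F z)) 0 Ω :=
      hA.eqOn_zero_of_preconnected_of_frequently_eq_zero hΩconn.isPreconnected hy₀ hfreq
    exact hTotal φ fun z hz => heq hz
  -- accumulation for the three sets
  have accm : ∀ ε : ℝ, 0 < ε → ∃ z ∈ Sm, z ≠ z₀ ∧ dist z z₀ < ε := by
    intro ε hε
    set δ : ℝ := min ε r / 2 with hδ
    have hδ0 : 0 < δ := by positivity
    have hδε : δ < ε := by
      have := min_le_left ε r; simp only [hδ]; linarith
    have hδr : δ < r := by
      have := min_le_right ε r; simp only [hδ]; linarith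
    refine ⟨z₀ - (δ : ℂ), ⟨?_, ?_⟩, ?_, ?_⟩
    · apply hball
      simp only [Metric.mem_ball, Complex.dist_eq]
      have : z₀ - (δ : ℂ) - z₀ = -(δ : ℂ) := by ring
      rw [this]
      simpa [abs_of_pos hδ0] using hδr
    · simp [hz₀def, hδ0]
    · intro hcon
      have : (z₀ - (δ : ℂ)).re = z₀.re := by rw [hcon]
      simp [hz₀def] at this
      linarith
    · simp only [Complex.dist_eq]
      have : z₀ - (δ : ℂ) - z₀ = -(δ : ℂ) := by ring
      rw [this]
      simpa [abs_of_pos hδ0] using hδε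
  have accp : ∀ ε : ℝ, 0 < ε → ∃ z ∈ Sp, z ≠ z₀ ∧ dist z z₀ < ε := by
    intro ε hε
    set δ : ℝ := min ε r / 2 with hδ
    have hδ0 : 0 < δ := by positivity
    have hδε : δ < ε := by
      have := min_le_left ε r; simp only [hδ]; linarith
    have hδr : δ < r := by
      have := min_le_right ε r; simp only [hδ]; linarith
    refine ⟨z₀ + (δ : ℂ), ⟨?_, ?_⟩, ?_, ?_⟩
    · apply hball
      simp only [Metric.mem_ball, Complex.dist_eq]
      have : z₀ + (δ : ℂ) - z₀ = (δ : ℂ) := by ring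
      rw [this]
      simpa [abs_of_pos hδ0] using hδr
    · simp [hz₀def, hδ0]
    · intro hcon
      have : (z₀ + (δ : ℂ)).re = z₀.re := by rw [hcon]
      simp [hz₀def] at this
      linarith
    · simp only [Complex.dist_eq]
      have : z₀ + (δ : ℂ) - z₀ = (δ : ℂ) := by ring
      rw [this]
      simpa [abs_of_pos hδ0] using hδε
  have accq : ∀ ε : ℝ, 0 < ε → ∃ z ∈ Sq, z ≠ z₀ ∧ dist z z₀ < ε := by
    intro ε hε
    set δ : ℝ := min ε r / 2 with hδ
    have hδ0 : 0 < δ := by positivity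
    have hδε : δ < ε := by
      have := min_le_left ε r; simp only [hδ]; linarith
    have hδr : δ < r := by
      have := min_le_right ε r; simp only [hδ]; linarith
    obtain ⟨q, hq1, hq2⟩ := exists_rat_btwn (lt_add_of_pos_right y₀ hδ0)
    have hqd : dist (Complex.I * (q : ℂ)) z₀ < δ := by
      simp only [Complex.dist_eq, hz₀def]
      have : Complex.I * (q : ℂ) - Complex.I * (y₀ : ℂ)
          = Complex.I * (((q : ℝ) - y₀ : ℝ) : ℂ) := by push_cast; ring
      rw [this]
      simp only [norm_mul, Complex.norm_I, one_mul, Complex.norm_real, Real.norm_eq_abs]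
      rw [abs_of_pos (by linarith)]
      linarith
    refine ⟨Complex.I * (q : ℂ), ⟨?_, q, rfl⟩, ?_, ?_⟩
    · exact hball (Metric.mem_ball.2 (hqd.trans hδr))
    · intro hcon
      rw [hz₀def] at hcon
      have : ((q : ℝ) : ℂ) = ((y₀ : ℝ) : ℂ) := mul_left_cancel₀ Complex.I_ne_zero hcon
      have : (q : ℝ) = y₀ := by exact_mod_cast this
      linarith
    · exact hqd.trans hδε
  -- semigroup powers
  have hTpow : ∀ t : ℝ, 0 ≤ t → ∀ n : ℕ, T ((n : ℝ) * t) = (T t) ^ n := by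
    intro t ht n
    induction n with
    | zero => simpa using hT0
    | succ n ih =>
      have hcast : ((n + 1 : ℕ) : ℝ) * t = (n : ℝ) * t + t := by push_cast; ring
      rw [hcast, hTadd _ _ (mul_nonneg (Nat.cast_nonneg n) ht) ht, ih, pow_succ]
      rfl
  have hgpow : ∀ n : ℕ, T ((n : ℝ)) = (T 1) ^ n := by
    intro n
    simpa using hTpow 1 zero_le_one n
  have hEigPow : ∀ z ∈ Ω, ∀ n : ℕ, ((T 1) ^ n) (F z) = (Complex.exp z) ^ n • F z := by
    intro z hz n
    have := hEig z hz (n : ℝ) (Nat.cast_nonneg n)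
    rw [hgpow n] at this
    rw [this]
    congr 1
    rw [← Complex.exp_nat_mul]
    norm_num
  -- tendsto helper
  have tendsmul : ∀ c : ℂ, ‖c‖ < 1 → ∀ v : B,
      Filter.Tendsto (fun n : ℕ => c ^ n • v) Filter.atTop (𝓝 0) := by
    intro c hc v
    have h1 : Filter.Tendsto (fun n : ℕ => c ^ n) Filter.atTop (𝓝 0) :=
      tendsto_pow_atTop_nhds_zero_of_norm_lt_one hc
    simpa using h1.smul_const v
  -- X-side: orbits tend to zero on span of Sm eigenvectors
  have hX : ∀ x ∈ Submodule.span ℂ (F '' Sm),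
      Filter.Tendsto (fun n : ℕ => ((T 1) ^ n) x) Filter.atTop (𝓝 0) := by
    intro x hx
    induction hx using Submodule.span_induction with
    | mem x hxm =>
      obtain ⟨z, ⟨hzΩ, hzre⟩, rfl⟩ := hxm
      have hlt : ‖Complex.exp z‖ < 1 := by
        rw [Complex.norm_exp]
        exact Real.exp_lt_one_iff.2 hzre
      have := tendsmul _ hlt (F z)
      refine this.congr fun n => ?_
      rw [hEigPow z hzΩ n]
    | zero => simpa using tendsto_const_nhds
    | add x y hx' hy' hx hy => simpa [map_add] using hx.add hy
    | smul c x hx' hx => simpa [map_smul] using hx.const_smul c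
  -- Y-side: approximate right inverses on span of Sp eigenvectors
  have hY : ∀ y ∈ Submodule.span ℂ (F '' Sp), ∃ w : ℕ → B,
      Filter.Tendsto w Filter.atTop (𝓝 0) ∧ ∀ n, ((T 1) ^ n) (w n) = y := by
    intro y hy
    induction hy using Submodule.span_induction with
    | mem y hym =>
      obtain ⟨z, ⟨hzΩ, hzre⟩, rfl⟩ := hym
      refine ⟨fun n => (Complex.exp (-z)) ^ n • F z, ?_, ?_⟩
      · apply tendsmul
        rw [Complex.norm_exp]
        exact Real.exp_lt_one_iff.2 (by simpa using hzre)
      · intro n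
        rw [map_smul, hEigPow z hzΩ n, smul_smul, ← mul_pow, ← Complex.exp_add]
        simp
    | zero => exact ⟨fun _ => 0, tendsto_const_nhds, fun n => by simp⟩
    | add x y hx' hy' hx hy =>
      obtain ⟨w1, hw1, hw1e⟩ := hx
      obtain ⟨w2, hw2, hw2e⟩ := hy
      exact ⟨fun n => w1 n + w2 n, by simpa using hw1.add hw2,
        fun n => by simp [map_add, hw1e n, hw2e n]⟩
    | smul c x hx' hx =>
      obtain ⟨w, hw, hwe⟩ := hx
      exact ⟨fun n => c • w n, by simpa using hw.const_smul c,
        fun n => by simp [map_smul, hwe n]⟩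
  -- density of the spans
  have dXm := key Sm (fun z hz => hz.1) accm
  have dXp := key Sp (fun z hz => hz.1) accp
  have dXq := key Sq (fun z hz => hz.1) accq
  -- topological transitivity
  have trans : ∀ U V : Set B, IsOpen U → U.Nonempty → IsOpen V → V.Nonempty →
      ∃ x ∈ U, ∃ n : ℕ, ((T 1) ^ n) x ∈ V := by
    intro U V hU hUne hV hVne
    obtain ⟨u, hu⟩ := hUne
    obtain ⟨v, hv⟩ := hVne
    obtain ⟨εU, hεU, hballU⟩ := Metric.isOpen_iff.1 hU u hu
    obtain ⟨εV, hεV, hballV⟩ := Metric.isOpen_iff.1 hV v hv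
    obtain ⟨x, hxmem, hxd⟩ := Metric.mem_closure_iff.1 (dXm u) (εU / 2) (by positivity)
    obtain ⟨y, hymem, hyd⟩ := Metric.mem_closure_iff.1 (dXp v) (εV / 2) (by positivity)
    have hx0 := hX x hxmem
    obtain ⟨w, hw0, hwe⟩ := hY y hymem
    have h1 : ∀ᶠ n : ℕ in Filter.atTop, ‖w n‖ < εU / 2 := by
      have := hw0.norm
      simp only [norm_zero] at this
      exact this.eventually_lt_const (by positivity)
    have h2 : ∀ᶠ n : ℕ in Filter.atTop, ‖((T 1) ^ n) x‖ < εV / 2 := by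
      have := hx0.norm
      simp only [norm_zero] at this
      exact this.eventually_lt_const (by positivity)
    obtain ⟨n, hn1, hn2⟩ := (h1.and h2).exists
    refine ⟨x + w n, ?_, n, ?_⟩
    · apply hballU
      rw [Metric.mem_ball]
      calc dist (x + w n) u ≤ dist (x + w n) x + dist x u := dist_triangle _ _ _
        _ < εU / 2 + εU / 2 := by
            apply add_lt_add _ (by rwa [dist_comm])
            rw [dist_eq_norm]
            simpa using hn1
        _ = εU := by ring
    · apply hballV
      rw [Metric.mem_ball, map_add, hwe n]
      calc dist (((T 1) ^ n) x + y) v ≤ dist (((T 1) ^ n) x + y) y + dist y v :=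
            dist_triangle _ _ _
        _ < εV / 2 + εV / 2 := by
            apply add_lt_add _ (by rw [dist_comm]; exact hyd)
            rw [dist_eq_norm]
            simpa using hn2
        _ = εV := by ring
  -- Baire category: existence of a dense orbit
  haveI : SecondCountableTopology B := UniformSpace.secondCountable_of_separable B
  haveI : Nonempty B := ⟨0⟩
  set 𝒰 : Set (Set B) := {U | U ∈ TopologicalSpace.countableBasis B ∧ U.Nonempty} with h𝒰
  haveI : Countable ↥𝒰 :=
    ((TopologicalSpace.countable_countableBasis B).mono fun U hU => hU.1).to_subtype
  have hGdense : Dense (⋂ U : ↥𝒰, ⋃ n : ℕ, (fun x : B => ((T 1) ^ n) x) ⁻¹' (U : Set B)) := by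
    apply dense_iInter_of_isOpen
    · intro U
      exact isOpen_iUnion fun n =>
        (TopologicalSpace.isOpen_of_mem_countableBasis U.2.1).preimage ((T 1) ^ n).continuous
    · intro U
      rw [dense_iff_inter_open]
      intro V hV hVne
      obtain ⟨x, hxV, n, hxU⟩ := trans V (U : Set B) hV hVne
        (TopologicalSpace.isOpen_of_mem_countableBasis U.2.1) U.2.2
      exact ⟨x, hxV, Set.mem_iUnion.2 ⟨n, hxU⟩⟩
  obtain ⟨f, hf⟩ := hGdense.nonempty
  constructor
  · refine ⟨f, ?_⟩
    rw [dense_iff_inter_open]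
    intro V hV hVne
    obtain ⟨v, hv⟩ := hVne
    obtain ⟨U, hUb, hvU, hUV⟩ :=
      (TopologicalSpace.isBasis_countableBasis B).exists_subset_of_mem_open hv hV
    have hfU := Set.mem_iInter.1 hf ⟨U, hUb, ⟨v, hvU⟩⟩
    obtain ⟨n, hn⟩ := Set.mem_iUnion.1 hfU
    refine ⟨((T 1) ^ n) f, hUV hn, (n : ℝ), Set.mem_Ici.2 (Nat.cast_nonneg n), ?_⟩
    show T ((n : ℕ) : ℝ) f = ((T 1) ^ n) f
    rw [hgpow n]
  -- periodic points
  · have hfix : ∀ t : ℝ, 0 ≤ t → ∀ x : B, T t x = x → ∀ m : ℕ, ((T t) ^ m) x = x := by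
      intro t ht x hx m
      induction m with
      | zero => simp
      | succ m ih => rw [pow_succ, ContinuousLinearMap.mul_apply, hx, ih]
    have hper : ∀ x ∈ Submodule.span ℂ (F '' Sq),
        ∃ N : ℕ, 0 < N ∧ T ((N : ℝ) * (2 * Real.pi)) x = x := by
      intro x hx
      induction hx using Submodule.span_induction with
      | mem x hxm =>
        obtain ⟨z, ⟨hzΩ, q, rfl⟩, rfl⟩ := hxm
        refine ⟨q.den, q.den_pos, ?_⟩
        rw [hEig _ hzΩ _ (by positivity)]
        have hdq : ((q.den : ℂ)) * (q : ℂ) = ((q.num : ℤ) : ℂ) := by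
          have h1 : ((q.den : ℚ)) * q = (q.num : ℚ) := by
            rw [mul_comm]
            exact_mod_cast Rat.mul_den_eq_num q
          exact_mod_cast congrArg (fun a : ℚ => (a : ℂ)) h1
        have hexp : (((q.den : ℝ) * (2 * Real.pi) : ℝ) : ℂ) * (Complex.I * (q : ℂ))
            = ((q.num : ℤ) : ℂ) * (2 * (Real.pi : ℂ) * Complex.I) := by
          push_cast at hdq ⊢
          linear_combination (2 * (Real.pi : ℂ) * Complex.I) * hdq
        rw [hexp, Complex.exp_int_mul_two_pi_mul_I, one_smul]
      | zero => exact ⟨1, one_pos, by simp⟩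
      | add x y hx' hy' hx hy =>
        obtain ⟨N1, hN1, hx1⟩ := hx
        obtain ⟨N2, hN2, hy2⟩ := hy
        refine ⟨N1 * N2, Nat.mul_pos hN1 hN2, ?_⟩
        have e1 : ((N1 * N2 : ℕ) : ℝ) * (2 * Real.pi)
            = (N2 : ℝ) * ((N1 : ℝ) * (2 * Real.pi)) := by push_cast; ring
        have e2 : ((N1 * N2 : ℕ) : ℝ) * (2 * Real.pi)
            = (N1 : ℝ) * ((N2 : ℝ) * (2 * Real.pi)) := by push_cast; ring
        have hp1 : 0 ≤ (N1 : ℝ) * (2 * Real.pi) :=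
          mul_nonneg (Nat.cast_nonneg _) (by positivity)
        have hp2 : 0 ≤ (N2 : ℝ) * (2 * Real.pi) :=
          mul_nonneg (Nat.cast_nonneg _) (by positivity)
        rw [map_add]
        congr 1
        · rw [e1, hTpow _ hp1 N2]
          exact hfix _ hp1 x hx1 N2
        · rw [e2, hTpow _ hp2 N1]
          exact hfix _ hp2 y hy2 N1
      | smul c x hx' hx =>
        obtain ⟨N, hN, hxN⟩ := hx
        exact ⟨N, hN, by rw [map_smul, hxN]⟩
    apply Dense.mono _ dXq
    intro x hx
    obtain ⟨N, hN, hxN⟩ := hper x hx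
    exact ⟨(N : ℝ) * (2 * Real.pi), by positivity, hxN⟩
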